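/- arXiv:2309.11360 — 3 statements merged into one kernel-verified Lean document; each statement's English description precedes it below -/
import Mathlib

section
/- Let f be analytic on the unit disc 𝔻. Then the function u(z) := Re f^{1/2}(z), where f^{1/2} is the pointwise principal square-root of f, is continuous and subharmonic on 𝔻. -/
open MeasureTheory Real Set

noncomputable section

/-- The backward shift operator: `Bf(z) = (f(z) - f(0))/z` for `z ≠ 0`, `Bf(0) = f'(0)`. -/
def bwdShift (f : ℂ → ℂ) : ℂ → ℂ :=
  fun z => if z = 0 then deriv f 0 else (f z - f 0) / z

/-- The point `r·e^{iθ}`. -/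
def circlePoint (r θ : ℝ) : ℂ := (r : ℂ) * Complex.exp ((θ : ℂ) * Complex.I)

/-- The integral mean `(1/2π)∫₀^{2π} |f(re^{iθ})| dθ`. -/
def hardyMean1 (f : ℂ → ℂ) (r : ℝ) : ℝ :=
  (2 * π)⁻¹ * ∫ θ in (0:ℝ)..(2 * π), ‖f (circlePoint r θ)‖

/-- Membership in the Hardy space `H¹` of the unit disc. -/
def MemHardy1 (f : ℂ → ℂ) : Prop :=
  DifferentiableOn ℂ f (Metric.ball (0:ℂ) 1) ∧ BddAbove (hardyMean1 f '' Set.Ioo 0 1)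

/-- The `H¹` norm: `sup_{0<r<1} (1/2π)∫₀^{2π} |f(re^{iθ})| dθ`. -/
def hardyNorm1 (f : ℂ → ℂ) : ℝ := sSup (hardyMean1 f '' Set.Ioo 0 1)

/-- `g` gives the radial boundary values of `f` for a.e. `θ ∈ (0, 2π]`. -/
def IsRadialLimit (f : ℂ → ℂ) (g : ℝ → ℂ) : Prop :=
  ∀ᵐ θ ∂(volume.restrict (Set.Ioc (0:ℝ) (2 * π))),
    Filter.Tendsto (fun r : ℝ => f (circlePoint r θ)) (nhdsWithin 1 (Set.Iio 1)) (nhds (g θ))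

/-- `I` is an inner function: bounded analytic on the disc with unimodular radial
boundary values almost everywhere. -/
def IsInnerFn (I : ℂ → ℂ) : Prop :=
  DifferentiableOn ℂ I (Metric.ball (0:ℂ) 1) ∧
  (∀ z ∈ Metric.ball (0:ℂ) 1, ‖I z‖ ≤ 1) ∧
  ∀ᵐ θ ∂(volume.restrict (Set.Ioc (0:ℝ) (2 * π))),
    ∃ w : ℂ, ‖w‖ = 1 ∧
      Filter.Tendsto (fun r : ℝ => I (circlePoint r θ)) (nhdsWithin 1 (Set.Iio 1)) (nhds w)

/-- The pointwise principal square root: `0` at `0`, and `√|w|·e^{i·Arg(w)/2}` otherwise. -/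
def psqrt (w : ℂ) : ℂ :=
  if w = 0 then 0
  else (Real.sqrt ‖w‖ : ℂ) * Complex.exp (((w.arg / 2 : ℝ) : ℂ) * Complex.I)

end

lemma psqrt_eq_cpow (w : ℂ) : psqrt w = w ^ (2⁻¹ : ℂ) := by
  by_cases h : w = 0
  · subst h; simp [psqrt, Complex.zero_cpow (by norm_num : (2⁻¹:ℂ) ≠ 0)]
  · rw [psqrt, if_neg h, Complex.cpow_def_of_ne_zero h]
    have h1 : Complex.log w * 2⁻¹ =
        (↑(Real.log ‖w‖ / 2) : ℂ) + ↑(w.arg / 2) * Complex.I := by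
      rw [Complex.log]; push_cast; ring
    rw [h1, Complex.exp_add, ← Complex.ofReal_exp,
      ← Real.log_sqrt (norm_nonneg w),
      Real.exp_log (Real.sqrt_pos.2 (norm_pos_iff.mpr h))]

lemma psqrt_re_eq (w : ℂ) :
    (psqrt w).re = Real.sqrt ((‖w‖ + w.re) / 2) := by
  rw [psqrt_eq_cpow, Complex.cpow_inv_two_re]

lemma psqrt_re_of_sq {g w : ℂ} (h : g ^ 2 = w) : (psqrt w).re = |g.re| := by
  have h1 : ‖w‖ = g.re ^ 2 + g.im ^ 2 := by
    rw [← h, norm_pow, Complex.sq_norm, Complex.normSq_apply]; ring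
  have h2 : w.re = g.re ^ 2 - g.im ^ 2 := by
    rw [← h]; simp [pow_two, Complex.mul_re]
  rw [psqrt_re_eq, h1, h2,
    show (g.re ^ 2 + g.im ^ 2 + (g.re ^ 2 - g.im ^ 2)) / 2 = g.re ^ 2 by ring,
    Real.sqrt_sq_eq_abs]

lemma circle_mean {g : ℂ → ℂ} {c : ℂ} {r : ℝ} (hr : 0 < r)
    (hg : DifferentiableOn ℂ g (Metric.closedBall c r)) :
    ∫ θ in (0:ℝ)..(2*π), g (circleMap c r θ) = ((2*π : ℝ) : ℂ) • g c := by
  have h := hg.circleIntegral_sub_inv_smul (Metric.mem_ball_self hr)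
  rw [circleIntegral] at h
  simp only [deriv_circleMap, circleMap_sub_center, smul_eq_mul] at h
  have key : EqOn (fun θ : ℝ => circleMap 0 r θ * Complex.I *
      ((circleMap 0 r θ)⁻¹ * g (circleMap c r θ)))
      (fun θ : ℝ => Complex.I * g (circleMap c r θ)) (Set.uIcc 0 (2*π)) := by
    intro θ _
    have hne : circleMap 0 r θ ≠ 0 := by
      simpa using circleMap_ne_center (c := (0:ℂ)) hr.ne' (θ := θ)
    field_simp
  rw [intervalIntegral.integral_congr key, intervalIntegral.integral_const_mul] at h
  have h2 : Complex.I * ∫ θ in (0:ℝ)..(2*π), g (circleMap c r θ) =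
      Complex.I * (((2*π : ℝ) : ℂ) • g c) := by
    rw [h, smul_eq_mul]; push_cast; ring
  exact mul_left_cancel₀ Complex.I_ne_zero h2

lemma psqrt_sq (w : ℂ) : psqrt w ^ 2 = w := by
  by_cases h : w = 0
  · subst h; simp [psqrt]
  · rw [psqrt_eq_cpow, Complex.cpow_def_of_ne_zero h, sq, ← Complex.exp_add,
      show Complex.log w * 2⁻¹ + Complex.log w * 2⁻¹ = Complex.log w by ring,
      Complex.exp_log h]


/-- If `f` is analytic on the unit disc, then `u(z) = Re f^{1/2}(z)` is continuous and
subharmonic on the disc: it satisfies the sub-mean value inequality on all sufficiently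
small circles about each point. -/
theorem re_psqrt_continuousOn_and_subharmonic (f : ℂ → ℂ)
    (hf : DifferentiableOn ℂ f (Metric.ball (0:ℂ) 1)) :
    ContinuousOn (fun z => (psqrt (f z)).re) (Metric.ball (0:ℂ) 1) ∧
    ∀ z ∈ Metric.ball (0:ℂ) 1, ∃ ρ > 0, Metric.ball z ρ ⊆ Metric.ball (0:ℂ) 1 ∧
      ∀ r ∈ Set.Ioo (0:ℝ) ρ,
        (psqrt (f z)).re ≤
          (2 * π)⁻¹ * ∫ θ in (0:ℝ)..(2 * π), (psqrt (f (z + circlePoint r θ))).re := by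
  have hπ : (0:ℝ) < 2 * π := by positivity
  constructor
  · have hc : ContinuousOn f (Metric.ball 0 1) := hf.continuousOn
    have h1 : ContinuousOn (fun z => Real.sqrt ((‖f z‖ + (f z).re) / 2))
        (Metric.ball (0:ℂ) 1) :=
      Real.continuous_sqrt.comp_continuousOn
        (((continuous_norm.comp_continuousOn hc).add
          (Complex.continuous_re.comp_continuousOn hc)).div_const 2)
    exact h1.congr fun z _ => psqrt_re_eq (f z)
  · intro z hz
    by_cases hfz : f z = 0
    · refine ⟨1 - ‖z‖, sub_pos.2 (by simpa [dist_zero_right] using hz),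
        Metric.ball_subset_ball' (by simp), ?_⟩
      intro r _
      have h0 : (psqrt (f z)).re = 0 := by simp [hfz, psqrt]
      rw [h0]
      refine mul_nonneg (by positivity) (intervalIntegral.integral_nonneg hπ.le ?_)
      intro θ _
      rw [psqrt_re_eq]
      exact Real.sqrt_nonneg _
    · have hfd : ∀ ζ ∈ Metric.ball (0:ℂ) 1, DifferentiableAt ℂ f ζ := fun ζ hζ =>
        hf.differentiableAt (Metric.isOpen_ball.mem_nhds hζ)
      have hca : ContinuousAt f z := (hfd z hz).continuousAt
      have habs : 0 < ‖f z‖ := norm_pos_iff.mpr hfz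
      obtain ⟨δ, hδ0, hδ⟩ := Metric.continuousAt_iff.1 hca (‖f z‖) habs
      have hρ0 : 0 < min δ (1 - ‖z‖) :=
        lt_min hδ0 (sub_pos.2 (by simpa [dist_zero_right] using hz))
      have hsub : Metric.ball z (min δ (1 - ‖z‖)) ⊆ Metric.ball (0:ℂ) 1 :=
        (Metric.ball_subset_ball (min_le_right _ _)).trans
          (Metric.ball_subset_ball' (by simp))
      refine ⟨min δ (1 - ‖z‖), hρ0, hsub, ?_⟩
      set G : ℂ → ℂ := fun ζ => psqrt (f z) * Complex.exp (Complex.log (f ζ / f z) / 2)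
        with hGdef
      have hball : ∀ ζ ∈ Metric.ball z (min δ (1 - ‖z‖)),
          dist (f ζ) (f z) < ‖f z‖ := fun ζ hζ =>
        hδ (lt_of_lt_of_le hζ (min_le_left _ _))
      have hne : ∀ ζ ∈ Metric.ball z (min δ (1 - ‖z‖)), f ζ ≠ 0 := by
        intro ζ hζ h0
        have h1 := hball ζ hζ
        rw [h0] at h1
        simp [Complex.dist_eq] at h1
      have hpos : ∀ ζ ∈ Metric.ball z (min δ (1 - ‖z‖)), 0 < (f ζ / f z).re := by
        intro ζ hζ
        have h1 : ‖f ζ / f z - 1‖ < 1 := by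
          rw [show f ζ / f z - 1 = (f ζ - f z) / f z by field_simp, norm_div,
            div_lt_one habs]
          simpa [Complex.dist_eq] using hball ζ hζ
        have h2 : |(f ζ / f z - 1).re| ≤ ‖f ζ / f z - 1‖ :=
          Complex.abs_re_le_norm _
        have h3 : (f ζ / f z).re = 1 + (f ζ / f z - 1).re := by
          rw [Complex.sub_re, Complex.one_re]; ring
        have h4 := neg_abs_le ((f ζ / f z - 1).re)
        rw [h3]; linarith
      have hsq : ∀ ζ ∈ Metric.ball z (min δ (1 - ‖z‖)), G ζ ^ 2 = f ζ := by
        intro ζ hζ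
        have hne' : f ζ / f z ≠ 0 := div_ne_zero (hne ζ hζ) hfz
        have e1 : Complex.exp (Complex.log (f ζ / f z) / 2) ^ 2 = f ζ / f z := by
          rw [sq, ← Complex.exp_add, add_halves, Complex.exp_log hne']
        rw [hGdef]
        simp only
        rw [mul_pow, psqrt_sq, e1, mul_comm, div_mul_cancel₀ _ hfz]
      have hGd : ∀ ζ ∈ Metric.ball z (min δ (1 - ‖z‖)), DifferentiableAt ℂ G ζ := by
        intro ζ hζ
        have hdf : DifferentiableAt ℂ (fun ζ => f ζ / f z) ζ := (hfd ζ (hsub hζ)).div_const _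
        have hlog : DifferentiableAt ℂ (fun ζ => Complex.log (f ζ / f z)) ζ :=
          hdf.clog (Complex.mem_slitPlane_iff.2 (Or.inl (hpos ζ hζ)))
        exact (differentiableAt_const _).mul ((hlog.div_const 2).cexp)
      intro r hr
      obtain ⟨hr0, hrρ⟩ := hr
      have hcb : Metric.closedBall z r ⊆ Metric.ball z (min δ (1 - ‖z‖)) :=
        Metric.closedBall_subset_ball hrρ
      have hGdiff : DifferentiableOn ℂ G (Metric.closedBall z r) := fun ζ hζ =>
        (hGd ζ (hcb hζ)).differentiableWithinAt
      have hm := circle_mean hr0 hGdiff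
      have hmem : ∀ θ : ℝ, circleMap z r θ ∈ Metric.ball z (min δ (1 - ‖z‖)) := fun θ =>
        hcb (circleMap_mem_closedBall z hr0.le θ)
      have hcont : Continuous fun θ : ℝ => G (circleMap z r θ) :=
        continuous_iff_continuousAt.2 fun θ =>
          ((hGd _ (hmem θ)).continuousAt).comp (continuous_circleMap z r).continuousAt
      have hint : IntervalIntegrable (fun θ => G (circleMap z r θ)) volume 0 (2*π) :=
        hcont.intervalIntegrable _ _
      have hre : ∫ θ in (0:ℝ)..(2*π), (G (circleMap z r θ)).re = 2 * π * (G z).re := by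
        have h2 := Complex.reCLM.intervalIntegral_comp_comm hint
        rw [hm] at h2
        simpa [Complex.smul_re] using h2
      have heq : ∀ θ : ℝ, (psqrt (f (z + circlePoint r θ))).re = |(G (circleMap z r θ)).re| := by
        intro θ
        have hpt : z + circlePoint r θ = circleMap z r θ := by
          simp [circlePoint, circleMap]
        rw [hpt, psqrt_re_of_sq (hsq _ (hmem θ))]
      rw [intervalIntegral.integral_congr (g := fun θ => |(G (circleMap z r θ)).re|)
        (fun θ _ => heq θ)]
      rw [psqrt_re_of_sq (hsq z (Metric.mem_ball_self hρ0))]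
      have habsle : |(G z).re| =
          (2*π)⁻¹ * |∫ θ in (0:ℝ)..(2*π), (G (circleMap z r θ)).re| := by
        rw [hre, abs_mul, abs_of_pos hπ]
        field_simp
      rw [habsle]
      exact mul_le_mul_of_nonneg_left
        (intervalIntegral.abs_integral_le_integral_abs hπ.le) (by positivity)
end

section
/- If w₁ and w₂ are complex numbers with Re w₁ ≥ 0 and Re w₂ ≥ 0, then |Re w₁ − Re w₂| ≤ √|w₁² − w₂²|. -/
open MeasureTheory Real Set

/-- If `Re w₁ ≥ 0` and `Re w₂ ≥ 0`, then `|Re w₁ - Re w₂| ≤ √|w₁² - w₂²|`. -/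
theorem abs_re_sub_re_le_sqrt_abs_sq_sub_sq (w₁ w₂ : ℂ)
    (h₁ : 0 ≤ w₁.re) (h₂ : 0 ≤ w₂.re) :
    |w₁.re - w₂.re| ≤ Real.sqrt (‖w₁ ^ 2 - w₂ ^ 2‖) := by
  rw [show |w₁.re - w₂.re| = Real.sqrt (|w₁.re - w₂.re| ^ 2) by
    rw [Real.sqrt_sq_eq_abs, abs_abs]]
  apply Real.sqrt_le_sqrt
  have key : w₁ ^ 2 - w₂ ^ 2 = (w₁ - w₂) * (w₁ + w₂) := by ring
  rw [key, norm_mul, sq]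
  have hA : |w₁.re - w₂.re| ≤ ‖w₁ - w₂‖ := by
    have := Complex.abs_re_le_norm (w₁ - w₂)
    simpa using this
  have hB : |w₁.re - w₂.re| ≤ ‖w₁ + w₂‖ := by
    have h3 : |w₁.re - w₂.re| ≤ w₁.re + w₂.re := abs_le.2 ⟨by linarith, by linarith⟩
    have h4 : w₁.re + w₂.re ≤ ‖w₁ + w₂‖ := by
      have := Complex.re_le_norm (w₁ + w₂)
      simpa using this
    linarith
  exact mul_le_mul hA hB (abs_nonneg _) (norm_nonneg _)
end

section
/- Let f be a function in the Hardy space H¹ of the unit disc with f(0) ≥ 0, set a := √(f(0)) and b := (1/2π)∫₀^{2π} f^{1/2}(e^{iθ}) dθ, where f^{1/2} is the pointwise principal square-root of f. Then ‖Bf‖₁ ≤ √( (‖f‖₁ + f(0))² − 4·f(0)·(Re b)² ), where B is the backward shift. -/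
open MeasureTheory Real Set

/- ### Auxiliary lemmas -/

noncomputable section Aux

def sqre (w : ℂ) : ℝ := Real.sqrt ((‖w‖ + w.re) / 2)

lemma sqre_arg_nonneg (w : ℂ) : 0 ≤ (‖w‖ + w.re) / 2 := by
  have h := abs_le.mp (Complex.abs_re_le_norm w); linarith [h.1]

lemma sqre_nonneg (w : ℂ) : 0 ≤ sqre w := Real.sqrt_nonneg _

lemma sq_sqre (w : ℂ) : sqre w ^ 2 = (‖w‖ + w.re) / 2 :=
  Real.sq_sqrt (sqre_arg_nonneg w)

lemma sqre_sq_le (w : ℂ) : sqre w ^ 2 ≤ ‖w‖ := by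
  rw [sq_sqre]; have h := abs_le.mp (Complex.abs_re_le_norm w); linarith [h.2]

lemma continuous_sqre : Continuous sqre :=
  Real.continuous_sqrt.comp ((continuous_norm.add Complex.continuous_re).div_const 2)

lemma psqrt_re (w : ℂ) : (psqrt w).re = sqre w := by
  rcases eq_or_ne w 0 with rfl | hw
  · simp [psqrt, sqre]
  · rw [psqrt, if_neg hw]
    rw [Complex.re_ofReal_mul, Complex.exp_ofReal_mul_I_re,
      Real.cos_half (Complex.neg_pi_lt_arg w).le (Complex.arg_le_pi w),
      Complex.cos_arg hw, ← Real.sqrt_mul (norm_nonneg w), sqre]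
    congr 1
    have : ‖w‖ ≠ 0 := (norm_ne_zero_iff).mpr hw
    field_simp

end Aux


lemma cs_interval {u v : ℝ → ℝ} (hu : Continuous u) (hv : Continuous v) :
    (∫ θ in (0:ℝ)..(2*π), u θ * v θ) ≤
    Real.sqrt (∫ θ in (0:ℝ)..(2*π), (u θ)^2) * Real.sqrt (∫ θ in (0:ℝ)..(2*π), (v θ)^2) := by
  set A := ∫ θ in (0:ℝ)..(2*π), (u θ)^2 with hAdef
  set B := ∫ θ in (0:ℝ)..(2*π), u θ * v θ with hBdef
  set C := ∫ θ in (0:ℝ)..(2*π), (v θ)^2 with hCdef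
  have h2π : (0:ℝ) ≤ 2*π := by positivity
  have hA : 0 ≤ A := intervalIntegral.integral_nonneg h2π (fun x _ => sq_nonneg _)
  have hC : 0 ≤ C := intervalIntegral.integral_nonneg h2π (fun x _ => sq_nonneg _)
  have key : ∀ x : ℝ, 0 ≤ A * (x*x) + (2*B) * x + C := by
    intro x
    have hnn : 0 ≤ ∫ θ in (0:ℝ)..(2*π), (x * u θ + v θ)^2 :=
      intervalIntegral.integral_nonneg h2π (fun t _ => sq_nonneg _)
    have expand : (∫ θ in (0:ℝ)..(2*π), (x * u θ + v θ)^2)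
        = A * x^2 + (2*B) * x + C := by
      have h1 : (fun θ => (x * u θ + v θ)^2)
          = fun θ => x^2 * (u θ)^2 + ((2*x) * (u θ * v θ) + (v θ)^2) := by
        funext θ; ring
      rw [h1, intervalIntegral.integral_add, intervalIntegral.integral_add,
          intervalIntegral.integral_const_mul, intervalIntegral.integral_const_mul]
      · ring
      · exact (continuous_const.mul (hu.mul hv)).intervalIntegrable _ _
      · exact (hv.pow 2).intervalIntegrable _ _
      · exact (continuous_const.mul (hu.pow 2)).intervalIntegrable _ _
      · exact ((continuous_const.mul (hu.mul hv)).add (hv.pow 2)).intervalIntegrable _ _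
    nlinarith [expand ▸ hnn]
  have hd := discrim_le_zero key
  rw [discrim] at hd
  have hB2 : B^2 ≤ A*C := by nlinarith
  calc B ≤ |B| := le_abs_self B
    _ = Real.sqrt (B^2) := (Real.sqrt_sq_eq_abs B).symm
    _ ≤ Real.sqrt (A*C) := Real.sqrt_le_sqrt hB2
    _ = Real.sqrt A * Real.sqrt C := Real.sqrt_mul hA _

lemma expr_nonneg {a : ℝ} (ha : 0 ≤ a) (w : ℂ) : 0 ≤ ‖w‖ + a^2 - 2*a*sqre w := by
  nlinarith [sq_nonneg (a - sqre w), sqre_sq_le w, sqre_nonneg w]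

lemma expr_nonneg' {a : ℝ} (ha : 0 ≤ a) (w : ℂ) : 0 ≤ ‖w‖ + a^2 + 2*a*sqre w := by
  nlinarith [sqre_nonneg w, norm_nonneg w, sq_nonneg a]

lemma uv_eq {a : ℝ} (ha : 0 ≤ a) (w : ℂ) :
    Real.sqrt (‖w‖ + a^2 - 2*a*sqre w) * Real.sqrt (‖w‖ + a^2 + 2*a*sqre w)
      = ‖w - ((a^2 : ℝ) : ℂ)‖ := by
  have h1 := sq_sqre w
  have h2 : ‖w‖ ^ 2 = w.re^2 + w.im^2 := by
    rw [Complex.sq_norm, Complex.normSq_apply]; ring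
  have h3 : ‖w - ((a^2:ℝ):ℂ)‖ = Real.sqrt ((w.re - a^2)^2 + w.im^2) := by
    rw [Complex.norm_def, Complex.normSq_apply, Complex.sub_re, Complex.sub_im,
      Complex.ofReal_re, Complex.ofReal_im]
    ring_nf
  rw [← Real.sqrt_mul (expr_nonneg ha w), h3]
  congr 1
  linear_combination (-(4*a^2)) * h1 + h2

noncomputable def pk (z : ℂ) (ρ θ : ℝ) : ℝ :=
  (ρ^2 - ‖z‖ ^ 2) / ‖circleMap 0 ρ θ - z‖ ^ 2

lemma pk_nonneg {z : ℂ} {ρ : ℝ} (hz : ‖z‖ ≤ ρ) (θ : ℝ) : 0 ≤ pk z ρ θ := by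
  apply div_nonneg
  · nlinarith [norm_nonneg z]
  · positivity

lemma pk_eq {z : ℂ} {ρ : ℝ} (hρ : 0 < ρ) (hz : ‖z‖ < ρ) (θ : ℝ) :
    (circleMap 0 ρ θ) * ((circleMap 0 ρ θ - z)⁻¹ +
      (starRingEnd ℂ) z * (((ρ:ℂ)^2) - (starRingEnd ℂ) z * circleMap 0 ρ θ)⁻¹)
      = ((pk z ρ θ : ℝ) : ℂ) := by
  set w := circleMap 0 ρ θ with hw
  have habs : ‖w‖ = ρ := by rw [hw, norm_circleMap_zero, abs_of_pos hρ]
  have hw0 : w ≠ 0 := by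
    intro h; rw [h] at habs; simp at habs; rw [← habs] at hρ; exact lt_irrefl 0 hρ
  have hwz : w - z ≠ 0 := by
    rw [sub_ne_zero]
    intro h
    rw [h] at habs; rw [habs] at hz; exact lt_irrefl _ hz
  have hmulconj : w * (starRingEnd ℂ) w = ((ρ:ℂ))^2 := by
    rw [Complex.mul_conj, ← Complex.sq_norm, habs]
    push_cast; ring
  have hfact : (((ρ:ℂ))^2) - (starRingEnd ℂ) z * w
      = w * ((starRingEnd ℂ) w - (starRingEnd ℂ) z) := by
    linear_combination -hmulconj
  have hconjwz : (starRingEnd ℂ) w - (starRingEnd ℂ) z ≠ 0 := by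
    intro h; exact hwz (by rwa [← map_sub, map_eq_zero] at h)
  have hden2 : (((ρ:ℂ))^2) - (starRingEnd ℂ) z * w ≠ 0 := by
    rw [hfact]; exact mul_ne_zero hw0 hconjwz
  have habssub : ((‖circleMap 0 ρ θ - z‖ : ℝ) : ℂ) ^ 2
      = (w - z) * ((starRingEnd ℂ) w - (starRingEnd ℂ) z) := by
    rw [← hw, ← Complex.ofReal_pow, ← Complex.normSq_eq_norm_sq, ← Complex.mul_conj, map_sub]
  have habsz : ((‖z‖ : ℝ) : ℂ) ^ 2 = z * (starRingEnd ℂ) z := by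
    rw [← Complex.ofReal_pow, ← Complex.normSq_eq_norm_sq, ← Complex.mul_conj]
  rw [pk]
  push_cast
  rw [habssub, habsz, hfact, ← hmulconj]
  field_simp
  ring

lemma circleMap_mem_ball {s : ℝ} (h0 : 0 ≤ s) (h1 : s < 1) (θ : ℝ) :
    circleMap 0 s θ ∈ Metric.ball (0:ℂ) 1 := by
  simp only [Metric.mem_ball, Complex.dist_eq, sub_zero]
  rw [show ‖circleMap 0 s θ‖ = |s| from norm_circleMap_zero s θ, abs_of_nonneg h0]
  exact h1

lemma poisson_rep {F : ℂ → ℂ} (hF : DifferentiableOn ℂ F (Metric.ball 0 1)) {ρ : ℝ}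
    (h0 : 0 < ρ) (h1 : ρ < 1) {z : ℂ} (hz : ‖z‖ < ρ) :
    ∫ θ in (0:ℝ)..(2*π), (pk z ρ θ) • F (circleMap 0 ρ θ) = ((2*π : ℝ)) • F z := by
  have hsub : Metric.closedBall (0:ℂ) ρ ⊆ Metric.ball 0 1 := Metric.closedBall_subset_ball h1
  have hc : ContinuousOn F (Metric.closedBall 0 ρ) := hF.continuousOn.mono hsub
  have hd : ∀ x ∈ Metric.ball (0:ℂ) ρ \ (∅ : Set ℂ), DifferentiableAt ℂ F x := by
    intro x hx
    exact hF.differentiableAt (Metric.isOpen_ball.mem_nhds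
      (Metric.ball_subset_ball h1.le hx.1))
  have hzb : z ∈ Metric.ball (0:ℂ) ρ := by
    simpa [Metric.mem_ball, Complex.dist_eq] using hz
  have hcauchy := Complex.circleIntegral_sub_inv_smul_of_differentiable_on_off_countable
      countable_empty hzb hc hd
  set G : ℂ → ℂ := fun ζ => (starRingEnd ℂ) z * ((((ρ:ℝ):ℂ)^2) - (starRingEnd ℂ) z * ζ)⁻¹ * F ζ
    with hGdef
  have hGden : ∀ ζ ∈ Metric.closedBall (0:ℂ) ρ, (((ρ:ℂ))^2) - (starRingEnd ℂ) z * ζ ≠ 0 := by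
    intro ζ hζ h
    have hζρ : ‖ζ‖ ≤ ρ := by
      simpa [Metric.mem_closedBall, Complex.dist_eq] using hζ
    have h1' : ‖(starRingEnd ℂ) z * ζ‖ ≤ ‖z‖ * ρ := by
      rw [norm_mul, Complex.norm_conj]
      exact mul_le_mul_of_nonneg_left hζρ (norm_nonneg z)
    have h2' : ((ρ:ℂ))^2 = (starRingEnd ℂ) z * ζ := by rwa [sub_eq_zero] at h
    have h3' : ‖((ρ:ℂ))^2‖ = ρ^2 := by
      rw [norm_pow, Complex.norm_real, Real.norm_of_nonneg h0.le]
    rw [h2'] at h3'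
    nlinarith [norm_nonneg z]
  have hGc : ContinuousOn G (Metric.closedBall 0 ρ) := by
    apply ContinuousOn.mul
    apply ContinuousOn.mul continuousOn_const
    · exact ((continuousOn_const.sub (continuousOn_const.mul continuousOn_id)).inv₀ hGden)
    · exact hc
  have hGd : ∀ x ∈ Metric.ball (0:ℂ) ρ \ (∅ : Set ℂ), DifferentiableAt ℂ G x := by
    intro x hx
    have hxc : x ∈ Metric.closedBall (0:ℂ) ρ := Metric.ball_subset_closedBall hx.1
    have h1 : DifferentiableAt ℂ (fun ζ : ℂ => (((ρ:ℝ):ℂ)^2) - (starRingEnd ℂ) z * ζ) x := by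
      fun_prop
    exact ((differentiableAt_const ((starRingEnd ℂ) z)).mul (h1.inv (hGden x hxc))).mul (hd x hx)
  have hgoursat := Complex.circleIntegral_eq_zero_of_differentiable_on_off_countable
      h0.le countable_empty hGc hGd
  rw [circleIntegral] at hcauchy hgoursat
  simp only [deriv_circleMap] at hcauchy hgoursat
  -- integrability of the two interval integrands
  have hwcont : Continuous fun θ : ℝ => circleMap 0 ρ θ := continuous_circleMap 0 ρ
  have hFcont : Continuous fun θ : ℝ => F (circleMap 0 ρ θ) :=
    hF.continuousOn.comp_continuous hwcont (fun θ => circleMap_mem_ball h0.le h1 θ)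
  have hwz : ∀ θ : ℝ, circleMap 0 ρ θ - z ≠ 0 := by
    intro θ h
    rw [sub_eq_zero] at h
    have : ‖circleMap 0 ρ θ‖ = ρ := by rw [norm_circleMap_zero, abs_of_pos h0]
    rw [← h, this] at hz
    exact lt_irrefl _ hz
  have hI1 : IntervalIntegrable
      (fun θ => (circleMap 0 ρ θ * Complex.I) • ((circleMap 0 ρ θ - z)⁻¹ • F (circleMap 0 ρ θ)))
      volume 0 (2*π) := by
    apply Continuous.intervalIntegrable
    exact ((hwcont.mul continuous_const).smul
      (((hwcont.sub continuous_const).inv₀ hwz).smul hFcont))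
  have hI2 : IntervalIntegrable (fun θ => (circleMap 0 ρ θ * Complex.I) • G (circleMap 0 ρ θ))
      volume 0 (2*π) := by
    apply Continuous.intervalIntegrable
    have hdenc : Continuous fun θ : ℝ => ((((ρ:ℝ):ℂ)^2) - (starRingEnd ℂ) z * circleMap 0 ρ θ) :=
      continuous_const.sub (continuous_const.mul hwcont)
    have hdenne : ∀ θ : ℝ, ((((ρ:ℝ):ℂ)^2) - (starRingEnd ℂ) z * circleMap 0 ρ θ) ≠ 0 :=
      fun θ => hGden _ (Metric.sphere_subset_closedBall (by
        simp [Complex.dist_eq, norm_circleMap_zero, abs_of_pos h0]))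
    exact (hwcont.mul continuous_const).smul
      ((continuous_const.mul (hdenc.inv₀ hdenne)).mul hFcont)
  have hsum := intervalIntegral.integral_add hI1 hI2
  rw [hcauchy, hgoursat, add_zero] at hsum
  -- transform the integrand pointwise
  have hpt : ∀ θ : ℝ,
      (circleMap 0 ρ θ * Complex.I) • ((circleMap 0 ρ θ - z)⁻¹ • F (circleMap 0 ρ θ))
        + (circleMap 0 ρ θ * Complex.I) • G (circleMap 0 ρ θ)
      = Complex.I * (((pk z ρ θ : ℝ) : ℂ) * F (circleMap 0 ρ θ)) := by
    intro θ
    rw [← pk_eq h0 hz θ]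
    simp only [hGdef, smul_eq_mul]
    ring
  rw [intervalIntegral.integral_congr (g := fun θ => Complex.I * (((pk z ρ θ : ℝ) : ℂ) * F (circleMap 0 ρ θ))) (fun θ _ => hpt θ)] at hsum
  rw [intervalIntegral.integral_const_mul] at hsum
  have hIne : Complex.I ≠ 0 := Complex.I_ne_zero
  have hkey : (∫ θ in (0:ℝ)..(2*π), ((pk z ρ θ : ℝ) : ℂ) * F (circleMap 0 ρ θ))
      = ((2*π:ℝ) : ℂ) * F z := by
    apply mul_left_cancel₀ hIne
    rw [hsum, smul_eq_mul]
    push_cast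
    ring
  calc ∫ θ in (0:ℝ)..(2*π), (pk z ρ θ) • F (circleMap 0 ρ θ)
      = ∫ θ in (0:ℝ)..(2*π), ((pk z ρ θ : ℝ) : ℂ) * F (circleMap 0 ρ θ) := by
        simp_rw [Complex.real_smul]
    _ = ((2*π:ℝ) : ℂ) * F z := hkey
    _ = ((2*π : ℝ)) • F z := by rw [Complex.real_smul]

lemma poisson_mass {ρ : ℝ} (h0 : 0 < ρ) (h1 : ρ < 1) {z : ℂ} (hz : ‖z‖ < ρ) :
    ∫ θ in (0:ℝ)..(2*π), pk z ρ θ = 2*π := by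
  have h := poisson_rep (F := fun _ => (1:ℂ)) (differentiableOn_const _) h0 h1 hz
  simp only [smul_eq_mul, mul_one, Complex.real_smul] at h
  rw [intervalIntegral.integral_ofReal] at h
  exact_mod_cast h

lemma poisson_bound {F : ℂ → ℂ} (hF : DifferentiableOn ℂ F (Metric.ball 0 1)) {ρ : ℝ}
    (h0 : 0 < ρ) (h1 : ρ < 1) {z : ℂ} (hz : ‖z‖ < ρ) :
    (2*π) * ‖F z‖ ≤
      ∫ θ in (0:ℝ)..(2*π), pk z ρ θ * ‖F (circleMap 0 ρ θ)‖ := by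
  have h2π : (0:ℝ) ≤ 2*π := by positivity
  have hrep := poisson_rep hF h0 h1 hz
  have : ‖((2*π : ℝ)) • F z‖ ≤ ∫ θ in (0:ℝ)..(2*π), ‖(pk z ρ θ) • F (circleMap 0 ρ θ)‖ := by
    rw [← hrep]
    exact intervalIntegral.norm_integral_le_integral_norm h2π
  calc (2*π) * ‖F z‖ = ‖((2*π : ℝ)) • F z‖ := by
        rw [norm_smul, Real.norm_eq_abs, abs_of_nonneg h2π]
    _ ≤ ∫ θ in (0:ℝ)..(2*π), ‖(pk z ρ θ) • F (circleMap 0 ρ θ)‖ := this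
    _ = ∫ θ in (0:ℝ)..(2*π), pk z ρ θ * ‖F (circleMap 0 ρ θ)‖ := by
        apply intervalIntegral.integral_congr
        intro θ _
        show ‖(pk z ρ θ) • F (circleMap 0 ρ θ)‖ = _
        rw [norm_smul, Real.norm_eq_abs, abs_of_nonneg (pk_nonneg hz.le θ)]

lemma pk_symm {r ρ : ℝ} (hr : 0 < r) (hρ : 0 < ρ) (θ t : ℝ) :
    pk (circleMap 0 r θ) ρ t = pk (circleMap 0 r t) ρ θ := by
  have key : circleMap 0 ρ θ - circleMap 0 r t
      = Complex.exp (((θ+t : ℝ) : ℂ)*Complex.I) *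
        (starRingEnd ℂ) (circleMap 0 ρ t - circleMap 0 r θ) := by
    simp only [circleMap_zero, map_sub, map_mul, Complex.conj_ofReal]
    rw [← Complex.exp_conj, ← Complex.exp_conj]
    simp only [map_mul, Complex.conj_ofReal, Complex.conj_I]
    rw [mul_sub, ← mul_assoc, ← mul_assoc, mul_comm _ ((ρ:ℂ)), mul_comm _ ((r:ℂ)),
      mul_assoc ((ρ:ℂ)), mul_assoc ((r:ℂ)), ← Complex.exp_add, ← Complex.exp_add]
    congr 3
    · push_cast; ring
    · push_cast; ring
  have habs : ‖circleMap 0 ρ θ - circleMap 0 r t‖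
      = ‖circleMap 0 ρ t - circleMap 0 r θ‖ := by
    rw [key, norm_mul, Complex.norm_conj, Complex.norm_exp_ofReal_mul_I, one_mul]
  rw [pk, pk, norm_circleMap_zero, norm_circleMap_zero, habs]

lemma mean_mono {F : ℂ → ℂ} (hF : DifferentiableOn ℂ F (Metric.ball 0 1)) {r ρ : ℝ}
    (hr : 0 < r) (hrρ : r < ρ) (h1 : ρ < 1) :
    (∫ θ in (0:ℝ)..(2*π), ‖F (circleMap 0 r θ)‖) ≤
      ∫ θ in (0:ℝ)..(2*π), ‖F (circleMap 0 ρ θ)‖ := by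
  have h2π : (0:ℝ) ≤ 2*π := by positivity
  have hρ0 : 0 < ρ := hr.trans hrρ
  have hr1 : r < 1 := hrρ.trans h1
  set μ := volume.restrict (Set.Ioc (0:ℝ) (2*π)) with hμ
  have hfin : IsFiniteMeasure μ := by
    constructor
    rw [hμ, Measure.restrict_apply_univ]
    exact measure_Ioc_lt_top
  -- continuity facts
  have hFρcont : Continuous fun t : ℝ => ‖F (circleMap 0 ρ t)‖ :=
    continuous_norm.comp (hF.continuousOn.comp_continuous (continuous_circleMap 0 ρ)
      (fun θ => circleMap_mem_ball hρ0.le h1 θ))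
  have hFrcont : Continuous fun t : ℝ => ‖F (circleMap 0 r t)‖ :=
    continuous_norm.comp (hF.continuousOn.comp_continuous (continuous_circleMap 0 r)
      (fun θ => circleMap_mem_ball hr.le hr1 θ))
  -- the kernel as an explicit function
  have hcne : ∀ θ t : ℝ, circleMap 0 ρ t - circleMap 0 r θ ≠ 0 := by
    intro θ t h
    rw [sub_eq_zero] at h
    have := congrArg (‖·‖) h
    rw [norm_circleMap_zero, norm_circleMap_zero, abs_of_pos hρ0, abs_of_pos hr] at this
    exact (ne_of_gt hrρ) this
  have hpkeq : ∀ θ t : ℝ, pk (circleMap 0 r θ) ρ t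
      = (ρ^2 - r^2) / ‖circleMap 0 ρ t - circleMap 0 r θ‖^2 := by
    intro θ t
    rw [pk, norm_circleMap_zero, abs_of_pos hr]
  set K : ℝ × ℝ → ℝ :=
    fun p => pk (circleMap 0 r p.1) ρ p.2 * ‖F (circleMap 0 ρ p.2)‖ with hK
  have hKcont : Continuous K := by
    rw [hK]
    have : (fun p : ℝ × ℝ => pk (circleMap 0 r p.1) ρ p.2)
        = fun p : ℝ × ℝ => (ρ^2 - r^2) / ‖circleMap 0 ρ p.2 - circleMap 0 r p.1‖^2 := by
      funext p; exact hpkeq p.1 p.2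
    apply Continuous.mul
    · rw [this]
      apply continuous_const.div
      · apply Continuous.pow
        apply continuous_norm.comp
        exact ((continuous_circleMap 0 ρ).comp continuous_snd).sub
          ((continuous_circleMap 0 r).comp continuous_fst)
      · intro p
        exact pow_ne_zero _ ((norm_ne_zero_iff).mpr (hcne p.1 p.2))
    · exact hFρcont.comp continuous_snd
  -- integrability of K on the product
  have hKint : Integrable K (μ.prod μ) := by
    obtain ⟨C, hC⟩ := (isCompact_Icc.prod isCompact_Icc :
        IsCompact (Set.Icc (0:ℝ) (2*π) ×ˢ Set.Icc (0:ℝ) (2*π))).exists_bound_of_continuousOn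
      hKcont.continuousOn
    apply Integrable.mono' (integrable_const C) hKcont.aestronglyMeasurable
    rw [hμ, Measure.prod_restrict]
    refine (ae_restrict_iff' (measurableSet_Ioc.prod measurableSet_Ioc)).mpr (ae_of_all _ ?_)
    intro p hp
    exact hC p ⟨Ioc_subset_Icc_self hp.1, Ioc_subset_Icc_self hp.2⟩
  -- pointwise Poisson bound, in set-integral form
  have hpt : ∀ θ : ℝ, (2*π) * ‖F (circleMap 0 r θ)‖ ≤ ∫ t, K (θ, t) ∂μ := by
    intro θ
    have hzr : ‖circleMap 0 r θ‖ < ρ := by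
      rw [norm_circleMap_zero, abs_of_pos hr]; exact hrρ
    have := poisson_bound hF hρ0 h1 hzr
    rwa [intervalIntegral.integral_of_le h2π] at this
  -- integrate over θ
  have hmono : (∫ θ, (2*π) * ‖F (circleMap 0 r θ)‖ ∂μ)
      ≤ ∫ θ, (∫ t, K (θ, t) ∂μ) ∂μ := by
    apply integral_mono
    · exact (continuous_const.mul hFrcont).integrableOn_Ioc
    · exact hKint.integral_prod_left
    · intro θ
      exact hpt θ
  have hswap : (∫ θ, (∫ t, K (θ, t) ∂μ) ∂μ) = ∫ t, (∫ θ, K (θ, t) ∂μ) ∂μ :=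
    integral_integral_swap hKint
  have hinner : ∀ t : ℝ, (∫ θ, K (θ, t) ∂μ)
      = (2*π) * ‖F (circleMap 0 ρ t)‖ := by
    intro t
    have hKt : (fun θ => K (θ, t))
        = fun θ => pk (circleMap 0 r t) ρ θ * ‖F (circleMap 0 ρ t)‖ := by
      funext θ
      rw [hK]
      simp only
      rw [pk_symm hr hρ0]
    rw [hKt, integral_mul_const]
    have hzt : ‖circleMap 0 r t‖ < ρ := by
      rw [norm_circleMap_zero, abs_of_pos hr]; exact hrρ
    have hmass := poisson_mass hρ0 h1 hzt
    rw [intervalIntegral.integral_of_le h2π] at hmass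
    rw [hμ, hmass]
  rw [hswap] at hmono
  simp_rw [hinner] at hmono
  rw [intervalIntegral.integral_of_le h2π, intervalIntegral.integral_of_le h2π]
  have h2 : (∫ θ, (2*π) * ‖F (circleMap 0 r θ)‖ ∂μ)
      = (2*π) * ∫ θ, ‖F (circleMap 0 r θ)‖ ∂μ := integral_const_mul _ _
  have h3 : (∫ t, (2*π) * ‖F (circleMap 0 ρ t)‖ ∂μ)
      = (2*π) * ∫ t, ‖F (circleMap 0 ρ t)‖ ∂μ := integral_const_mul _ _
  rw [h2, h3] at hmono
  have hπ : (0:ℝ) < 2*π := by positivity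
  exact le_of_mul_le_mul_left hmono hπ
lemma circlePoint_eq (r θ : ℝ) : circlePoint r θ = circleMap 0 r θ := by
  simp [circlePoint, circleMap]

lemma bwdShift_eq_dslope (f : ℂ → ℂ) : bwdShift f = dslope f 0 := by
  funext z
  rcases eq_or_ne z 0 with rfl | hz
  · simp [bwdShift, dslope]
  · rw [bwdShift, dslope_of_ne _ hz, slope_def_field]
    simp only [if_neg hz, sub_zero]

lemma bwdShift_diff {f : ℂ → ℂ} (hf : DifferentiableOn ℂ f (Metric.ball 0 1)) :
    DifferentiableOn ℂ (bwdShift f) (Metric.ball 0 1) := by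
  rw [bwdShift_eq_dslope]
  exact (Complex.differentiableOn_dslope
    (Metric.isOpen_ball.mem_nhds (Metric.mem_ball_self one_pos))).mpr hf

lemma abs_bwdShift (f : ℂ → ℂ) {ρ : ℝ} (hρ : 0 < ρ) (θ : ℝ) :
    ‖bwdShift f (circleMap 0 ρ θ)‖ = ‖f (circleMap 0 ρ θ) - f 0‖ / ρ := by
  have hne : circleMap 0 ρ θ ≠ 0 := circleMap_ne_center (ne_of_gt hρ)
  rw [bwdShift]
  simp only [if_neg hne]
  rw [norm_div, norm_circleMap_zero, abs_of_pos hρ]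

lemma radius_bound {f : ℂ → ℂ} (hf : MemHardy1 f) {a ρ : ℝ} (ha : 0 ≤ a)
    (hf0 : f 0 = ((a^2 : ℝ) : ℂ)) (h0 : 0 < ρ) (h1 : ρ < 1) :
    hardyMean1 (bwdShift f) ρ ≤
      ρ⁻¹ * Real.sqrt ((hardyNorm1 f + a^2)^2 - 4*a^2 *
        ((2*π)⁻¹ * ∫ θ in (0:ℝ)..(2*π), sqre (f (circleMap 0 ρ θ)))^2) := by
  have h2π : (0:ℝ) ≤ 2*π := by positivity
  have hπ : (0:ℝ) < 2*π := by positivity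
  have hfw : Continuous fun θ : ℝ => f (circleMap 0 ρ θ) :=
    hf.1.continuousOn.comp_continuous (continuous_circleMap 0 ρ)
      (fun θ => circleMap_mem_ball h0.le h1 θ)
  have hA : Continuous fun θ : ℝ => ‖f (circleMap 0 ρ θ)‖ :=
    continuous_norm.comp hfw
  have hs : Continuous fun θ : ℝ => sqre (f (circleMap 0 ρ θ)) := continuous_sqre.comp hfw
  set u : ℝ → ℝ := fun θ =>
    Real.sqrt (‖f (circleMap 0 ρ θ)‖ + a^2 - 2*a*sqre (f (circleMap 0 ρ θ))) with hu
  set v : ℝ → ℝ := fun θ =>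
    Real.sqrt (‖f (circleMap 0 ρ θ)‖ + a^2 + 2*a*sqre (f (circleMap 0 ρ θ))) with hv
  have hucont : Continuous u :=
    Real.continuous_sqrt.comp (by exact (hA.add continuous_const).sub (continuous_const.mul hs))
  have hvcont : Continuous v :=
    Real.continuous_sqrt.comp (by exact (hA.add continuous_const).add (continuous_const.mul hs))
  -- step 1 : the mean of |Bf| at radius ρ
  have step1 : hardyMean1 (bwdShift f) ρ
      = (2*π)⁻¹ * (ρ⁻¹ * ∫ θ in (0:ℝ)..(2*π), ‖f (circleMap 0 ρ θ) - ((a^2:ℝ):ℂ)‖) := by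
    rw [hardyMean1]
    congr 1
    rw [← intervalIntegral.integral_const_mul]
    apply intervalIntegral.integral_congr
    intro θ _
    show ‖bwdShift f (circlePoint ρ θ)‖ = ρ⁻¹ * ‖f (circleMap 0 ρ θ) - ((a^2:ℝ):ℂ)‖
    rw [circlePoint_eq, abs_bwdShift f h0 θ, ← hf0, div_eq_inv_mul]
  -- step 2 : pointwise |f - a²| = u * v
  have step2 : (∫ θ in (0:ℝ)..(2*π), ‖f (circleMap 0 ρ θ) - ((a^2:ℝ):ℂ)‖)
      = ∫ θ in (0:ℝ)..(2*π), u θ * v θ := by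
    apply intervalIntegral.integral_congr
    intro θ _
    show ‖f (circleMap 0 ρ θ) - ((a^2:ℝ):ℂ)‖ = u θ * v θ
    exact (uv_eq ha (f (circleMap 0 ρ θ))).symm
  -- step 3 : Cauchy-Schwarz
  have step3 := cs_interval hucont hvcont
  -- step 4 : compute ∫ u², ∫ v²
  set IA := ∫ θ in (0:ℝ)..(2*π), ‖f (circleMap 0 ρ θ)‖ with hIA
  set IS := ∫ θ in (0:ℝ)..(2*π), sqre (f (circleMap 0 ρ θ)) with hIS
  have hu2 : (∫ θ in (0:ℝ)..(2*π), (u θ)^2) = IA + (2*π)*a^2 - 2*a*IS := by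
    have : (fun θ => (u θ)^2) = fun θ =>
        ‖f (circleMap 0 ρ θ)‖ + a^2 - 2*a*sqre (f (circleMap 0 ρ θ)) := by
      funext θ
      exact Real.sq_sqrt (expr_nonneg ha _)
    rw [this, intervalIntegral.integral_sub, intervalIntegral.integral_add,
      intervalIntegral.integral_const, intervalIntegral.integral_const_mul]
    · simp [hIA, hIS]
    · exact hA.intervalIntegrable _ _
    · exact continuous_const.intervalIntegrable _ _
    · exact (hA.add continuous_const).intervalIntegrable _ _
    · exact (continuous_const.mul hs).intervalIntegrable _ _
  have hv2 : (∫ θ in (0:ℝ)..(2*π), (v θ)^2) = IA + (2*π)*a^2 + 2*a*IS := by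
    have : (fun θ => (v θ)^2) = fun θ =>
        ‖f (circleMap 0 ρ θ)‖ + a^2 + 2*a*sqre (f (circleMap 0 ρ θ)) := by
      funext θ
      apply Real.sq_sqrt
      have := expr_nonneg' ha (f (circleMap 0 ρ θ))
      linarith [this]
    rw [this, intervalIntegral.integral_add, intervalIntegral.integral_add,
      intervalIntegral.integral_const, intervalIntegral.integral_const_mul]
    · simp [hIA, hIS]
    · exact hA.intervalIntegrable _ _
    · exact continuous_const.intervalIntegrable _ _
    · exact (hA.add continuous_const).intervalIntegrable _ _
    · exact (continuous_const.mul hs).intervalIntegrable _ _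
  -- bounds
  have hIAM : IA ≤ (2*π) * hardyNorm1 f := by
    have hmem : hardyMean1 f ρ ∈ hardyMean1 f '' Set.Ioo 0 1 := ⟨ρ, ⟨h0, h1⟩, rfl⟩
    have := le_csSup hf.2 hmem
    rw [hardyMean1] at this
    have h2 : (∫ θ in (0:ℝ)..(2*π), ‖f (circlePoint ρ θ)‖) = IA := by
      rw [hIA]
      apply intervalIntegral.integral_congr
      intro θ _
      show ‖f (circlePoint ρ θ)‖ = ‖f (circleMap 0 ρ θ)‖
      rw [circlePoint_eq]
    calc IA = (2*π) * ((2*π)⁻¹ * ∫ θ in (0:ℝ)..(2*π), ‖f (circlePoint ρ θ)‖) := by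
          rw [h2]; field_simp
      _ ≤ (2*π) * hardyNorm1 f := by
          apply mul_le_mul_of_nonneg_left this h2π
  have hIS0 : 0 ≤ IS :=
    intervalIntegral.integral_nonneg h2π (fun θ _ => sqre_nonneg _)
  have hu20 : 0 ≤ IA + (2*π)*a^2 - 2*a*IS := by
    rw [← hu2]
    exact intervalIntegral.integral_nonneg h2π (fun θ _ => sq_nonneg _)
  have hv20 : 0 ≤ IA + (2*π)*a^2 + 2*a*IS := by
    rw [← hv2]
    exact intervalIntegral.integral_nonneg h2π (fun θ _ => sq_nonneg _)
  -- assemble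
  set M := hardyNorm1 f with hM
  have hM0 : IA + (2*π)*a^2 ≤ (2*π)*M + (2*π)*a^2 := by linarith
  have hprod : (IA + (2*π)*a^2 - 2*a*IS) * (IA + (2*π)*a^2 + 2*a*IS)
      ≤ ((2*π)*M + (2*π)*a^2 - 2*a*IS) * ((2*π)*M + (2*π)*a^2 + 2*a*IS) := by
    apply mul_le_mul (by linarith) (by linarith) hv20 (by linarith)
  have hfinal : Real.sqrt ((∫ θ in (0:ℝ)..(2*π), (u θ)^2)) *
      Real.sqrt ((∫ θ in (0:ℝ)..(2*π), (v θ)^2))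
      ≤ (2*π) * Real.sqrt ((M + a^2)^2 - 4*a^2*((2*π)⁻¹ * IS)^2) := by
    rw [hu2, hv2, ← Real.sqrt_mul hu20]
    have heq : ((2*π)*M + (2*π)*a^2 - 2*a*IS) * ((2*π)*M + (2*π)*a^2 + 2*a*IS)
        = (2*π)^2 * ((M + a^2)^2 - 4*a^2*((2*π)⁻¹ * IS)^2) := by
      field_simp
      ring
    calc Real.sqrt ((IA + (2*π)*a^2 - 2*a*IS) * (IA + (2*π)*a^2 + 2*a*IS))
        ≤ Real.sqrt (((2*π)*M + (2*π)*a^2 - 2*a*IS) * ((2*π)*M + (2*π)*a^2 + 2*a*IS)) :=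
          Real.sqrt_le_sqrt hprod
      _ = (2*π) * Real.sqrt ((M + a^2)^2 - 4*a^2*((2*π)⁻¹ * IS)^2) := by
          rw [heq, Real.sqrt_mul (by positivity), Real.sqrt_sq h2π]
  calc hardyMean1 (bwdShift f) ρ
      = (2*π)⁻¹ * (ρ⁻¹ * ∫ θ in (0:ℝ)..(2*π), u θ * v θ) := by rw [step1, step2]
    _ ≤ (2*π)⁻¹ * (ρ⁻¹ * ((2*π) * Real.sqrt ((M + a^2)^2 - 4*a^2*((2*π)⁻¹ * IS)^2))) := by
        apply mul_le_mul_of_nonneg_left _ (by positivity)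
        apply mul_le_mul_of_nonneg_left _ (by positivity)
        exact le_trans step3 hfinal
    _ = ρ⁻¹ * Real.sqrt ((M + a^2)^2 - 4*a^2*((2*π)⁻¹ * IS)^2) := by
        rw [show (2*π)⁻¹ * (ρ⁻¹ * ((2*π) * Real.sqrt ((M + a^2)^2 - 4*a^2*((2*π)⁻¹ * IS)^2)))
            = ((2*π)⁻¹ * (2*π)) * (ρ⁻¹ * Real.sqrt ((M + a^2)^2 - 4*a^2*((2*π)⁻¹ * IS)^2)) from by
              ring,
          inv_mul_cancel₀ (ne_of_gt hπ), one_mul]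

lemma integral_re_eq {g : ℝ → ℂ}
    (hint : IntegrableOn (fun θ => psqrt (g θ)) (Set.Ioc (0:ℝ) (2*π)) volume) :
    (∫ θ in Set.Ioc (0:ℝ) (2*π), psqrt (g θ)).re
      = ∫ θ in Set.Ioc (0:ℝ) (2*π), sqre (g θ) := by
  have h := (Complex.reCLM.integral_comp_comm hint).symm
  simp only [Complex.reCLM_apply] at h
  rw [h]
  apply integral_congr_ae
  filter_upwards with θ
  exact psqrt_re (g θ)

lemma bre_nonneg {g : ℝ → ℂ} {b : ℂ}
    (hb : b = (2 * π : ℝ)⁻¹ • ∫ θ in (0:ℝ)..(2 * π), psqrt (g θ)) : 0 ≤ b.re := by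
  have h2π : (0:ℝ) ≤ 2*π := by positivity
  by_cases hint : IntervalIntegrable (fun θ => psqrt (g θ)) volume 0 (2*π)
  · rw [hb, Complex.real_smul, Complex.re_ofReal_mul]
    apply mul_nonneg (by positivity)
    rw [intervalIntegral.integral_of_le h2π,
      integral_re_eq ((intervalIntegrable_iff_integrableOn_Ioc_of_le h2π).mp hint)]
    exact integral_nonneg (fun θ => sqre_nonneg _)
  · rw [hb, intervalIntegral.integral_undef hint]
    simp

lemma fatou_step {f : ℂ → ℂ} (hf : MemHardy1 f) {g : ℝ → ℂ} (hg : IsRadialLimit f g)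
    {b : ℂ} (hb : b = (2 * π : ℝ)⁻¹ • ∫ θ in (0:ℝ)..(2 * π), psqrt (g θ))
    {t₀ : ℝ} (ht₁ : t₀ < 1) (ht₀ : 0 ≤ t₀) {ε : ℝ} (hε : 0 < ε) :
    ∃ ρ ∈ Set.Ioo t₀ 1,
      b.re - ε < (2*π)⁻¹ * ∫ θ in (0:ℝ)..(2*π), sqre (f (circleMap 0 ρ θ)) := by
  have h2π : (0:ℝ) ≤ 2*π := by positivity
  have hπ : (0:ℝ) < 2*π := by positivity
  set c : ℝ → ℝ := fun ρ => (2*π)⁻¹ * ∫ θ in (0:ℝ)..(2*π), sqre (f (circleMap 0 ρ θ)) with hc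
  have hcnonneg : ∀ ρ, 0 ≤ c ρ := fun ρ =>
    mul_nonneg (by positivity) (intervalIntegral.integral_nonneg h2π (fun θ _ => sqre_nonneg _))
  by_contra hcon
  push_neg at hcon
  -- then b.re - ε ≥ 0
  have hmid : (t₀+1)/2 ∈ Set.Ioo t₀ 1 := ⟨by linarith, by linarith⟩
  have hbe : 0 ≤ b.re - ε := le_trans (hcnonneg _) (hcon _ hmid)
  -- in particular b.re > 0, so the boundary integrand is integrable
  have hbpos : 0 < b.re := by linarith
  by_cases hint : IntervalIntegrable (fun θ => psqrt (g θ)) volume 0 (2*π)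
  swap
  · rw [hb, intervalIntegral.integral_undef hint] at hbpos
    simp at hbpos
  have hint' : IntegrableOn (fun θ => psqrt (g θ)) (Set.Ioc (0:ℝ) (2*π)) volume :=
    (intervalIntegrable_iff_integrableOn_Ioc_of_le h2π).mp hint
  have hgre : Integrable (fun θ => sqre (g θ)) (volume.restrict (Set.Ioc (0:ℝ) (2*π))) := by
    have h := hint'.re
    simp only [RCLike.re_to_complex] at h
    apply h.congr
    filter_upwards with θ
    exact psqrt_re (g θ)
  have hbre : (∫ θ in Set.Ioc (0:ℝ) (2*π), sqre (g θ)) = 2*π * b.re := by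
    rw [hb, Complex.real_smul, Complex.re_ofReal_mul, intervalIntegral.integral_of_le h2π,
      integral_re_eq hint']
    field_simp
  -- the sequence of radii
  set ρn : ℕ → ℝ := fun n => 1 - (1 - t₀) * (((n:ℝ)) + 2)⁻¹ with hρn
  have hn2 : ∀ n : ℕ, (0:ℝ) < ((n:ℝ)) + 2 := fun n => by positivity
  have hρmem : ∀ n, ρn n ∈ Set.Ioo t₀ 1 := by
    intro n
    have h1 : (0:ℝ) < (1 - t₀) * (((n:ℝ)) + 2)⁻¹ := by
      apply mul_pos (by linarith) (by positivity)
    have h2 : (((n:ℝ)) + 2)⁻¹ < 1 := by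
      rw [inv_lt_one_iff₀]
      right; linarith [Nat.cast_nonneg (α := ℝ) n]
    constructor
    · rw [hρn]
      simp only
      nlinarith
    · rw [hρn]; simp only; linarith
  have hρtendsto : Filter.Tendsto ρn Filter.atTop (nhdsWithin 1 (Set.Iio 1)) := by
    apply tendsto_nhdsWithin_of_tendsto_nhds_of_eventually_within
    · have h1 : Filter.Tendsto (fun n : ℕ => ((n:ℝ)) + 2) Filter.atTop Filter.atTop :=
        Filter.tendsto_atTop_add_const_right _ 2 tendsto_natCast_atTop_atTop
      have h2 : Filter.Tendsto (fun n : ℕ => (((n:ℝ)) + 2)⁻¹) Filter.atTop (nhds 0) :=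
        h1.inv_tendsto_atTop
      have h3 : Filter.Tendsto (fun n : ℕ => (1 - t₀) * (((n:ℝ)) + 2)⁻¹) Filter.atTop (nhds 0) := by
        have := h2.const_mul (1 - t₀)
        simpa using this
      have h4 := Filter.Tendsto.sub (tendsto_const_nhds (x := (1:ℝ)) (f := Filter.atTop)) h3
      simpa using h4
    · filter_upwards with n
      exact (hρmem n).2
  -- a.e. convergence
  have haelim : ∀ᵐ θ ∂(volume.restrict (Set.Ioc (0:ℝ) (2*π))),
      Filter.Tendsto (fun n => sqre (f (circleMap 0 (ρn n) θ))) Filter.atTop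
        (nhds (sqre (g θ))) := by
    filter_upwards [hg] with θ hθ
    have h1 : Filter.Tendsto (fun n => f (circlePoint (ρn n) θ)) Filter.atTop (nhds (g θ)) :=
      hθ.comp hρtendsto
    have h2 := (continuous_sqre.tendsto (g θ)).comp h1
    simpa [circlePoint_eq, Function.comp_def] using h2
  -- measurability
  have hmeasn : ∀ n, Measurable fun θ =>
      ENNReal.ofReal (sqre (f (circleMap 0 (ρn n) θ))) := by
    intro n
    apply Measurable.ennreal_ofReal
    apply Continuous.measurable
    apply continuous_sqre.comp
    apply hf.1.continuousOn.comp_continuous (continuous_circleMap 0 (ρn n))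
    intro θ
    apply circleMap_mem_ball _ (hρmem n).2
    exact le_trans ht₀ (hρmem n).1.le
  -- Fatou
  have hfatou := lintegral_liminf_le (μ := volume.restrict (Set.Ioc (0:ℝ) (2*π))) (u := Filter.atTop) hmeasn
  have hLHS : (∫⁻ θ in Set.Ioc (0:ℝ) (2*π),
      Filter.liminf (fun n => ENNReal.ofReal (sqre (f (circleMap 0 (ρn n) θ)))) Filter.atTop)
      = ∫⁻ θ in Set.Ioc (0:ℝ) (2*π), ENNReal.ofReal (sqre (g θ)) := by
    apply lintegral_congr_ae
    filter_upwards [haelim] with θ hθ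
    exact (ENNReal.tendsto_ofReal hθ).liminf_eq
  have hgint : (∫⁻ θ in Set.Ioc (0:ℝ) (2*π), ENNReal.ofReal (sqre (g θ)))
      = ENNReal.ofReal (∫ θ in Set.Ioc (0:ℝ) (2*π), sqre (g θ)) :=
    (ofReal_integral_eq_lintegral_ofReal hgre
      (Filter.Eventually.of_forall (fun θ => sqre_nonneg _))).symm
  have hRHSn : ∀ n, (∫⁻ θ in Set.Ioc (0:ℝ) (2*π),
      ENNReal.ofReal (sqre (f (circleMap 0 (ρn n) θ))))
      ≤ ENNReal.ofReal (2*π*(b.re - ε)) := by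
    intro n
    have hcontn : Continuous fun θ => sqre (f (circleMap 0 (ρn n) θ)) := by
      apply continuous_sqre.comp
      apply hf.1.continuousOn.comp_continuous (continuous_circleMap 0 (ρn n))
      intro θ
      exact circleMap_mem_ball (le_trans ht₀ (hρmem n).1.le) (hρmem n).2 θ
    have hintn : Integrable (fun θ => sqre (f (circleMap 0 (ρn n) θ)))
        (volume.restrict (Set.Ioc (0:ℝ) (2*π))) := hcontn.integrableOn_Ioc
    rw [← ofReal_integral_eq_lintegral_ofReal hintn
      (Filter.Eventually.of_forall (fun θ => sqre_nonneg _))]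
    apply ENNReal.ofReal_le_ofReal
    have hcn := hcon _ (hρmem n)
    have : (∫ θ in (0:ℝ)..(2*π), sqre (f (circleMap 0 (ρn n) θ))) ≤ 2*π*(b.re - ε) := by
      have h5 : (∫ θ in (0:ℝ)..(2*π), sqre (f (circleMap 0 (ρn n) θ)))
          = (2*π) * ((2*π)⁻¹ * ∫ θ in (0:ℝ)..(2*π), sqre (f (circleMap 0 (ρn n) θ))) := by
        field_simp
      rw [h5]
      exact mul_le_mul_of_nonneg_left hcn h2π
    rwa [intervalIntegral.integral_of_le h2π] at this
  have hliminfle : Filter.liminf (fun n => ∫⁻ θ in Set.Ioc (0:ℝ) (2*π),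
      ENNReal.ofReal (sqre (f (circleMap 0 (ρn n) θ)))) Filter.atTop
      ≤ ENNReal.ofReal (2*π*(b.re - ε)) :=
    Filter.liminf_le_of_frequently_le' (Filter.Frequently.of_forall hRHSn)
  have hchain : ENNReal.ofReal (2*π*b.re) ≤ ENNReal.ofReal (2*π*(b.re - ε)) := by
    calc ENNReal.ofReal (2*π*b.re) = ENNReal.ofReal (∫ θ in Set.Ioc (0:ℝ) (2*π), sqre (g θ)) := by
          rw [hbre]
      _ = ∫⁻ θ in Set.Ioc (0:ℝ) (2*π), ENNReal.ofReal (sqre (g θ)) := hgint.symm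
      _ = (∫⁻ θ in Set.Ioc (0:ℝ) (2*π),
            Filter.liminf (fun n => ENNReal.ofReal (sqre (f (circleMap 0 (ρn n) θ))))
              Filter.atTop) := hLHS.symm
      _ ≤ _ := le_trans hfatou hliminfle
  rw [ENNReal.ofReal_le_ofReal_iff (by nlinarith)] at hchain
  nlinarith

/-- For `f ∈ H¹` with `f(0) ≥ 0` and `b = (1/2π)∫₀^{2π} f^{1/2}(e^{iθ}) dθ`, we have
`‖Bf‖₁ ≤ √((‖f‖₁ + f(0))² - 4·f(0)·(Re b)²)`. -/
theorem backward_shift_H1_key_bound (f : ℂ → ℂ) (hf : MemHardy1 f)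
    (h0 : (f 0).im = 0 ∧ 0 ≤ (f 0).re) (g : ℝ → ℂ) (hg : IsRadialLimit f g)
    (b : ℂ) (hb : b = (2 * π : ℝ)⁻¹ • ∫ θ in (0:ℝ)..(2 * π), psqrt (g θ)) :
    hardyNorm1 (bwdShift f) ≤
      Real.sqrt ((hardyNorm1 f + (f 0).re) ^ 2 - 4 * (f 0).re * b.re ^ 2) := by
  have h2π : (0:ℝ) ≤ 2*π := by positivity
  set M := hardyNorm1 f with hM
  set a := Real.sqrt ((f 0).re) with ha_def
  have ha : 0 ≤ a := Real.sqrt_nonneg _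
  have ha2 : a^2 = (f 0).re := Real.sq_sqrt h0.2
  have hf0 : f 0 = ((a^2:ℝ):ℂ) := by
    rw [ha2]
    apply Complex.ext <;> simp [h0.1]
  have hbre0 : 0 ≤ b.re := bre_nonneg hb
  have hgoal : Real.sqrt ((M + (f 0).re) ^ 2 - 4 * (f 0).re * b.re ^ 2)
      = Real.sqrt ((M + a^2)^2 - 4*a^2*b.re^2) := by rw [ha2]
  rw [hardyNorm1, hgoal]
  apply Real.sSup_le _ (Real.sqrt_nonneg _)
  rintro x ⟨r, hr, rfl⟩
  have hεbound : ∀ ε ∈ Set.Ioo (0:ℝ) 1, hardyMean1 (bwdShift f) r ≤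
      (1-ε)⁻¹ * Real.sqrt ((M + a^2)^2 - 4*a^2*(max (b.re - ε) 0)^2) := by
    intro ε hε
    set t₀ := max r (1-ε) with ht₀def
    have ht₁ : t₀ < 1 := max_lt hr.2 (by linarith [hε.1])
    have ht₀ : 0 ≤ t₀ := le_trans hr.1.le (le_max_left _ _)
    obtain ⟨ρ, hρmem, hρc⟩ := fatou_step hf hg hb ht₁ ht₀ hε.1
    have hrρ : r < ρ := lt_of_le_of_lt (le_max_left r (1-ε)) hρmem.1
    have hρ0 : 0 < ρ := lt_of_le_of_lt ht₀ hρmem.1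
    set cρ := (2*π)⁻¹ * ∫ θ in (0:ℝ)..(2*π), sqre (f (circleMap 0 ρ θ)) with hcρ
    have hcρ0 : 0 ≤ cρ :=
      mul_nonneg (by positivity) (intervalIntegral.integral_nonneg h2π (fun θ _ => sqre_nonneg _))
    have hmono : hardyMean1 (bwdShift f) r ≤ hardyMean1 (bwdShift f) ρ := by
      rw [hardyMean1, hardyMean1]
      apply mul_le_mul_of_nonneg_left _ (by positivity)
      have := mean_mono (bwdShift_diff hf.1) hr.1 hrρ hρmem.2
      simpa [circlePoint_eq] using this
    have hradius := radius_bound hf ha hf0 hρ0 hρmem.2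
    have hsq : (max (b.re - ε) 0)^2 ≤ cρ^2 := by
      apply pow_le_pow_left₀ (le_max_right _ _)
      exact max_le hρc.le hcρ0
    calc hardyMean1 (bwdShift f) r ≤ hardyMean1 (bwdShift f) ρ := hmono
      _ ≤ ρ⁻¹ * Real.sqrt ((M + a^2)^2 - 4*a^2*cρ^2) := hradius
      _ ≤ (1-ε)⁻¹ * Real.sqrt ((M + a^2)^2 - 4*a^2*(max (b.re - ε) 0)^2) := by
          apply mul_le_mul
          · apply inv_anti₀ (by linarith [hε.2])
            exact le_trans (le_max_right r (1-ε)) hρmem.1.le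
          · apply Real.sqrt_le_sqrt
            nlinarith [hsq, sq_nonneg a]
          · exact Real.sqrt_nonneg _
          · exact inv_nonneg.mpr (by linarith [hε.2])
  have hlim : Filter.Tendsto
      (fun ε : ℝ => (1-ε)⁻¹ * Real.sqrt ((M + a^2)^2 - 4*a^2*(max (b.re - ε) 0)^2))
      (nhdsWithin 0 (Set.Ioi 0)) (nhds (Real.sqrt ((M + a^2)^2 - 4*a^2*b.re^2))) := by
    apply Filter.Tendsto.mono_left _ nhdsWithin_le_nhds
    have h1 : Filter.Tendsto (fun ε : ℝ => (1-ε)⁻¹) (nhds 0) (nhds 1) := by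
      have hcont : ContinuousAt (fun ε : ℝ => (1-ε)⁻¹) 0 :=
        ((continuous_const.sub continuous_id).continuousAt).inv₀ (by norm_num)
      simpa using hcont.tendsto
    have h2 : Filter.Tendsto
        (fun ε : ℝ => Real.sqrt ((M + a^2)^2 - 4*a^2*(max (b.re - ε) 0)^2)) (nhds 0)
        (nhds (Real.sqrt ((M + a^2)^2 - 4*a^2*b.re^2))) := by
      have hcont : Continuous fun ε : ℝ =>
          Real.sqrt ((M + a^2)^2 - 4*a^2*(max (b.re - ε) 0)^2) := by
        apply Real.continuous_sqrt.comp
        exact continuous_const.sub (continuous_const.mul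
          (((continuous_const.sub continuous_id).max continuous_const).pow 2))
      have h3 := hcont.tendsto 0
      simpa [sub_zero, max_eq_left hbre0] using h3
    have := h1.mul h2
    simpa using this
  exact ge_of_tendsto hlim (Filter.eventually_of_mem
    (Ioo_mem_nhdsGT_of_mem (by norm_num : (0:ℝ) ∈ Set.Ico 0 1)) hεbound)
end
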